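/- Let D ⊆ E be a Lagrangian subspace and S ⊆ E an isotropic subspace. Then the stretching D^S := (D ∩ S^⊥) + S is again Lagrangian, i.e. ((D ∩ S^⊥) + S)^⊥ = (D ∩ S^⊥) + S. -/

import Mathlib

/-- The orthogonal of a subspace `A` with respect to a bilinear form `B`:
`{e | ∀ a ∈ A, B e a = 0}`. -/
def bilinPerp {E : Type*} [AddCommGroup E] [Module ℝ E]
    (B : E →ₗ[ℝ] E →ₗ[ℝ] ℝ) (A : Submodule ℝ E) : Submodule ℝ E where
  carrier := {e | ∀ a ∈ A, B e a = 0}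
  add_mem' := by
    intro x y hx hy a ha
    simp only [Set.mem_setOf_eq] at *
    rw [map_add, LinearMap.add_apply, hx a ha, hy a ha, add_zero]
  zero_mem' := by
    intro a ha
    simp
  smul_mem' := by
    intro c x hx a ha
    simp only [Set.mem_setOf_eq] at *
    rw [map_smul, LinearMap.smul_apply, hx a ha, smul_zero]

lemma bilinPerp_eq_orthogonal {E : Type*} [AddCommGroup E] [Module ℝ E]
    (B : E →ₗ[ℝ] E →ₗ[ℝ] ℝ) (hsymm : ∀ x y : E, B x y = B y x) (A : Submodule ℝ E) :
    bilinPerp B A = LinearMap.BilinForm.orthogonal B A := by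
  ext x
  constructor
  · intro hx a ha
    show B a x = 0
    rw [hsymm a x]
    exact hx a ha
  · intro hx a ha
    have : B a x = 0 := hx a ha
    rw [hsymm x a]
    exact this

lemma orthogonal_sup {E : Type*} [AddCommGroup E] [Module ℝ E]
    (B : LinearMap.BilinForm ℝ E) (A C : Submodule ℝ E) :
    B.orthogonal (A ⊔ C) = B.orthogonal A ⊓ B.orthogonal C := by
  ext x
  constructor
  · intro hx
    exact ⟨fun a ha => hx a (Submodule.mem_sup_left ha),
           fun c hc => hx c (Submodule.mem_sup_right hc)⟩
  · rintro ⟨h1, h2⟩ n hn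
    obtain ⟨a, ha, c, hc, rfl⟩ := Submodule.mem_sup.mp hn
    have e1 : B a x = 0 := h1 a ha
    have e2 : B c x = 0 := h2 c hc
    show B (a + c) x = 0
    rw [map_add, LinearMap.add_apply, e1, e2, add_zero]

/-- Let `E` be a finite-dimensional real vector space with a nondegenerate
symmetric bilinear form. If `D ⊆ E` is Lagrangian (`D = D^⊥`) and `S ⊆ E` is isotropic
(`S ⊆ S^⊥`), then the stretching `D^S := (D ∩ S^⊥) + S` is again Lagrangian:
`((D ∩ S^⊥) + S)^⊥ = (D ∩ S^⊥) + S`. -/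
theorem stretching_is_lagrangian
    {E : Type*} [AddCommGroup E] [Module ℝ E] [FiniteDimensional ℝ E]
    (B : E →ₗ[ℝ] E →ₗ[ℝ] ℝ)
    (hsymm : ∀ x y : E, B x y = B y x)
    (hnondeg : ∀ x : E, (∀ y : E, B x y = 0) → x = 0)
    (D S : Submodule ℝ E)
    (hD : bilinPerp B D = D)
    (hS : S ≤ bilinPerp B S) :
    bilinPerp B ((D ⊓ bilinPerp B S) ⊔ S) = (D ⊓ bilinPerp B S) ⊔ S := by
  have hrefl : LinearMap.IsRefl B := fun x y h => (hsymm x y) ▸ h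
  have hnd : LinearMap.BilinForm.Nondegenerate B :=
    hrefl.nondegenerate_iff_separatingLeft.mpr hnondeg
  simp only [bilinPerp_eq_orthogonal B hsymm] at *
  set n := Module.finrank ℝ E with hn
  set W : Submodule ℝ E := (D ⊓ LinearMap.BilinForm.orthogonal B S) ⊔ S with hW
  have hfr : ∀ A : Submodule ℝ E,
      Module.finrank ℝ (LinearMap.BilinForm.orthogonal B A) = n - Module.finrank ℝ A :=
    fun A => LinearMap.BilinForm.finrank_orthogonal hnd A
  -- isotropy of W: W ≤ O W
  have hiso : W ≤ LinearMap.BilinForm.orthogonal B W := by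
    intro x hx y hy
    obtain ⟨a, ha, c, hc, rfl⟩ := Submodule.mem_sup.mp hx
    obtain ⟨a', ha', c', hc', rfl⟩ := Submodule.mem_sup.mp hy
    have h1 : B a' a = 0 := by
      have := ha.1; rw [← hD] at this
      exact this a' ha'.1
    have h2 : B a' c = 0 := hrefl c a' (ha'.2 c hc)
    have h3 : B c' a = 0 := ha.2 c' hc'
    have h4 : B c' c = 0 := hS hc c' hc'
    show B (a' + c') (a + c) = 0
    simp [map_add, h1, h2, h3, h4]
  -- dimension count
  have hDS : LinearMap.BilinForm.orthogonal B (D ⊔ S)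
      = (D ⊓ LinearMap.BilinForm.orthogonal B S) := by
    rw [orthogonal_sup, hD]
  have hDdim : Module.finrank ℝ D = n - Module.finrank ℝ D := by
    conv_lhs => rw [← hD]
    exact hfr D
  have hle1 : Module.finrank ℝ D ≤ n := Submodule.finrank_le D
  have hle2 : Module.finrank ℝ (D ⊔ S : Submodule ℝ E) ≤ n := Submodule.finrank_le _
  have hinter : (D ⊓ LinearMap.BilinForm.orthogonal B S) ⊓ S = D ⊓ S := by
    rw [inf_assoc, inf_eq_right.mpr hS]
  have hsum1 : Module.finrank ℝ (D ⊓ LinearMap.BilinForm.orthogonal B S : Submodule ℝ E)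
      = n - Module.finrank ℝ (D ⊔ S : Submodule ℝ E) := by
    rw [← hDS]; exact hfr _
  have hsum2 : Module.finrank ℝ (D ⊔ S : Submodule ℝ E) + Module.finrank ℝ (D ⊓ S : Submodule ℝ E)
      = Module.finrank ℝ D + Module.finrank ℝ S :=
    Submodule.finrank_sup_add_finrank_inf_eq D S
  have hsum3 : Module.finrank ℝ W
        + Module.finrank ℝ ((D ⊓ LinearMap.BilinForm.orthogonal B S) ⊓ S : Submodule ℝ E)
      = Module.finrank ℝ (D ⊓ LinearMap.BilinForm.orthogonal B S : Submodule ℝ E)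
        + Module.finrank ℝ S :=
    Submodule.finrank_sup_add_finrank_inf_eq _ _
  rw [hinter] at hsum3
  have hDinfS : Module.finrank ℝ (D ⊓ S : Submodule ℝ E) ≤ Module.finrank ℝ S :=
    Submodule.finrank_mono inf_le_right
  have hWdim : Module.finrank ℝ W = n - Module.finrank ℝ D := by omega
  have hOWdim : Module.finrank ℝ (LinearMap.BilinForm.orthogonal B W) = Module.finrank ℝ W := by
    rw [hfr W, hWdim]
    omega
  exact (Submodule.eq_of_le_of_finrank_le hiso (le_of_eq hOWdim)).symm
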